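/- Let 𝒞 be a unital category (a pointed category with binary products such that for all objects X, Y the morphisms ⟨1_X, 0⟩ : X → X × Y and ⟨0, 1_Y⟩ : Y → X × Y are jointly strongly epimorphic, so in particular every monomorphism into X × Y through which both factor is an isomorphism) which has binary coproducts, and suppose the opposite category 𝒞^op is a majority category. Then every object of 𝒞 is a zero object; i.e. 𝒞 is equivalent to the terminal category. -/

import Mathlib

open CategoryTheory CategoryTheory.Limits

/-- The triple of morphisms `(a, b, c)` is related by the ternary relation
`(r₁, r₂, r₃)`. -/
def TernaryRelated {C : Type*} [Category C] {R A B D S : C}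
    (r₁ : R ⟶ A) (r₂ : R ⟶ B) (r₃ : R ⟶ D) (a : S ⟶ A) (b : S ⟶ B) (c : S ⟶ D) : Prop :=
  ∃ f : S ⟶ R, f ≫ r₁ = a ∧ f ≫ r₂ = b ∧ f ≫ r₃ = c

/-- A category is a majority category when every (jointly monomorphic) internal ternary
relation is strictly closed with respect to the majority matrix. -/
def IsMajorityCategory (C : Type*) [Category C] : Prop :=
  ∀ ⦃A B D R : C⦄ (r₁ : R ⟶ A) (r₂ : R ⟶ B) (r₃ : R ⟶ D),
    (∀ ⦃S : C⦄ (f g : S ⟶ R),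
      f ≫ r₁ = g ≫ r₁ → f ≫ r₂ = g ≫ r₂ → f ≫ r₃ = g ≫ r₃ → f = g) →
    ∀ ⦃S : C⦄ (a₁ a₂ : S ⟶ A) (b₁ b₂ : S ⟶ B) (c₁ c₂ : S ⟶ D),
      TernaryRelated r₁ r₂ r₃ a₁ b₁ c₂ →
      TernaryRelated r₁ r₂ r₃ a₁ b₂ c₁ →
      TernaryRelated r₁ r₂ r₃ a₂ b₁ c₁ →
      TernaryRelated r₁ r₂ r₃ a₁ b₁ c₁

/-- A unital category (pointed with binary products, in which `⟨1,0⟩ : X ⟶ X ⨯ Y` and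
`⟨0,1⟩ : Y ⟶ X ⨯ Y` are jointly strongly epimorphic) with binary coproducts whose
opposite category is a majority category is equivalent to the terminal category:
every object is a zero object. -/
theorem unital_comajority_trivial {C : Type*} [Category C]
    [HasZeroObject C] [HasZeroMorphisms C] [HasBinaryProducts C] [HasBinaryCoproducts C]
    -- `⟨1,0⟩` and `⟨0,1⟩` are jointly strongly epimorphic:
    (hunital : ∀ (X Y : C) ⦃P Q : C⦄ (m : P ⟶ Q), Mono m →
      ∀ (u₁ : X ⟶ P) (u₂ : Y ⟶ P) (v : X ⨯ Y ⟶ Q),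
        u₁ ≫ m = prod.lift (𝟙 X) 0 ≫ v → u₂ ≫ m = prod.lift 0 (𝟙 Y) ≫ v →
        ∃ t : X ⨯ Y ⟶ P, t ≫ m = v ∧ prod.lift (𝟙 X) 0 ≫ t = u₁ ∧ prod.lift 0 (𝟙 Y) ≫ t = u₂)
    -- in particular, every monomorphism into `X ⨯ Y` through which both factor is iso:
    (hunital' : ∀ (X Y : C) ⦃R : C⦄ (r : R ⟶ X ⨯ Y), Mono r →
      (∃ u : X ⟶ R, u ≫ r = prod.lift (𝟙 X) 0) →
      (∃ v : Y ⟶ R, v ≫ r = prod.lift 0 (𝟙 Y)) → IsIso r)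
    (hcomaj : IsMajorityCategory Cᵒᵖ) :
    ∀ X : C, IsZero X := by
  intro X
  -- `⟨1,0⟩` and `⟨0,1⟩ : X ⟶ X ⨯ X` are jointly epimorphic.
  have jointlyEpi : ∀ ⦃S : C⦄ (f g : X ⨯ X ⟶ S),
      prod.lift (𝟙 X) 0 ≫ f = prod.lift (𝟙 X) 0 ≫ g →
      prod.lift 0 (𝟙 X) ≫ f = prod.lift 0 (𝟙 X) ≫ g → f = g := by
    intro S f g h1 h2
    have hm : Mono (prod.lift (𝟙 (X ⨯ X)) f) := mono_of_mono_fac (prod.lift_fst _ _)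
    obtain ⟨t, ht, -, -⟩ := hunital X X (prod.lift (𝟙 (X ⨯ X)) f) hm
      (prod.lift (𝟙 X) 0) (prod.lift 0 (𝟙 X)) (prod.lift (𝟙 (X ⨯ X)) g)
      (by apply Limits.prod.hom_ext <;> simp [h1]) (by apply Limits.prod.hom_ext <;> simp [h2])
    have hfst : t = 𝟙 (X ⨯ X) := by simpa [prod.lift_fst] using ht =≫ prod.fst
    have hsnd : t ≫ f = g := by simpa [prod.lift_snd] using ht =≫ prod.snd
    rw [hfst, Category.id_comp] at hsnd
    exact hsnd
  -- the ternary co-relation in `C` given by `⟨1,0⟩, ⟨0,1⟩, ⟨1,1⟩ : X ⟶ X ⨯ X`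
  set s₁ : X ⟶ X ⨯ X := prod.lift (𝟙 X) 0 with hs₁
  set s₂ : X ⟶ X ⨯ X := prod.lift 0 (𝟙 X) with hs₂
  set s₃ : X ⟶ X ⨯ X := prod.lift (𝟙 X) (𝟙 X) with hs₃
  have jm : ∀ ⦃S : Cᵒᵖ⦄ (f g : S ⟶ Opposite.op (X ⨯ X)),
      f ≫ s₁.op = g ≫ s₁.op → f ≫ s₂.op = g ≫ s₂.op → f ≫ s₃.op = g ≫ s₃.op →
      f = g := by
    intro S f g h1 h2 _
    have h1' : s₁ ≫ f.unop = s₁ ≫ g.unop := Quiver.Hom.op_inj (by simpa using h1)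
    have h2' : s₂ ≫ f.unop = s₂ ≫ g.unop := Quiver.Hom.op_inj (by simpa using h2)
    exact Quiver.Hom.unop_inj (jointlyEpi _ _ h1' h2')
  -- apply the majority property in `Cᵒᵖ`
  have key := hcomaj s₁.op s₂.op s₃.op jm (S := Opposite.op X)
    ((0 : X ⟶ X).op) ((𝟙 X).op) ((0 : X ⟶ X).op) ((𝟙 X).op)
    ((𝟙 X).op) ((0 : X ⟶ X).op)
    -- (0, 0, 0) is related via `0 : X ⨯ X ⟶ X`
    ⟨(0 : X ⨯ X ⟶ X).op, by
      constructor
      · rw [← op_comp]; exact congrArg Quiver.Hom.op (comp_zero)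
      constructor
      · rw [← op_comp]; exact congrArg Quiver.Hom.op (comp_zero)
      · rw [← op_comp]; exact congrArg Quiver.Hom.op (comp_zero)⟩
    -- (0, 1, 1) is related via `snd : X ⨯ X ⟶ X`
    ⟨(prod.snd : X ⨯ X ⟶ X).op, by
      constructor
      · rw [← op_comp]; exact congrArg Quiver.Hom.op (by simp [hs₁, prod.lift_fst, prod.lift_snd])
      constructor
      · rw [← op_comp]; exact congrArg Quiver.Hom.op (by simp [hs₂, prod.lift_fst, prod.lift_snd])
      · rw [← op_comp]; exact congrArg Quiver.Hom.op (by simp [hs₃, prod.lift_fst, prod.lift_snd])⟩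
    -- (1, 0, 1) is related via `fst : X ⨯ X ⟶ X`
    ⟨(prod.fst : X ⨯ X ⟶ X).op, by
      constructor
      · rw [← op_comp]; exact congrArg Quiver.Hom.op (by simp [hs₁, prod.lift_fst, prod.lift_snd])
      constructor
      · rw [← op_comp]; exact congrArg Quiver.Hom.op (by simp [hs₂, prod.lift_fst, prod.lift_snd])
      · rw [← op_comp]; exact congrArg Quiver.Hom.op (by simp [hs₃, prod.lift_fst, prod.lift_snd])⟩
  -- so (0, 0, 1) is related: there is `g : X ⨯ X ⟶ X` with
  -- `s₁ ≫ g = 0`, `s₂ ≫ g = 0`, `s₃ ≫ g = 𝟙`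
  obtain ⟨f, hf1, hf2, hf3⟩ := key
  have h1 : s₁ ≫ f.unop = 0 := Quiver.Hom.op_inj (by simpa using hf1)
  have h2 : s₂ ≫ f.unop = 0 := Quiver.Hom.op_inj (by simpa using hf2)
  have h3 : s₃ ≫ f.unop = 𝟙 X := Quiver.Hom.op_inj (by simpa using hf3)
  have hf0 : f.unop = 0 := jointlyEpi f.unop 0
    (by rw [h1, comp_zero]) (by rw [h2, comp_zero])
  rw [hf0, comp_zero] at h3
  exact (IsZero.iff_id_eq_zero X).mpr h3.symm
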